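/- Let γ(s,t) be an arclength-parametrized inextensible flow of partially null curves in E⁴₁ with partially null Frenet frame {T, N, B₁, B₂}, curvatures k₁, k₂ (k₃ = 0), flow ∂γ/∂t = β₁T + β₂N + β₃B₁ + β₄B₂ (so ∂β₁/∂s = β₂k₁), and ψ₁ = ⟨∂N/∂t, B₁⟩. If ∂β₄/∂s ≠ 0, then k₁ = −(∂ψ₁/∂s)/(∂β₄/∂s). -/

import Mathlib

/-!
Formalization of inextensible flows of partially null / pseudo null curves in
Minkowski space-time `E⁴₁` (ℝ⁴ with signature (-,+,+,+)).
-/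

noncomputable section

/-- The Minkowski bilinear form on `ℝ⁴` with signature `(-,+,+,+)`. -/
def mink (v w : Fin 4 → ℝ) : ℝ :=
  -(v 0 * w 0) + v 1 * w 1 + v 2 * w 2 + v 3 * w 3

/-- The Minkowski norm `‖v‖ = √|⟨v,v⟩|`. -/
def mnorm (v : Fin 4 → ℝ) : ℝ := Real.sqrt |mink v v|

/- ### Auxiliary calculus lemmas -/

section Aux

variable {E : Type*} [NormedAddCommGroup E] [NormedSpace ℝ E]
variable {f : ℝ → ℝ → E}

lemma letop' : ((⊤:ℕ∞) : WithTop ℕ∞) ≠ 0 := by simp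

lemma leadd' : ((⊤:ℕ∞) : WithTop ℕ∞) + 1 ≤ ((⊤:ℕ∞) : WithTop ℕ∞) := by exact_mod_cast le_top

lemma diffx (hf : ContDiff ℝ (⊤ : ℕ∞) (fun p : ℝ × ℝ => f p.1 p.2)) (s t : ℝ) :
    DifferentiableAt ℝ (fun x => f x t) s := by
  have : ContDiff ℝ (⊤ : ℕ∞) (fun x : ℝ => f x t) :=
    hf.comp (contDiff_id.prodMk contDiff_const)
  exact (this.differentiable letop') s

lemma diffy (hf : ContDiff ℝ (⊤ : ℕ∞) (fun p : ℝ × ℝ => f p.1 p.2)) (s t : ℝ) :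
    DifferentiableAt ℝ (fun y => f s y) t := by
  have : ContDiff ℝ (⊤ : ℕ∞) (fun y : ℝ => f s y) :=
    hf.comp (contDiff_const.prodMk contDiff_id)
  exact (this.differentiable letop') t

lemma hasDerivAt_py (hf : ContDiff ℝ (⊤ : ℕ∞) (fun p : ℝ × ℝ => f p.1 p.2)) (x y : ℝ) :
    HasDerivAt (fun y' => f x y')
      (fderiv ℝ (fun p : ℝ × ℝ => f p.1 p.2) (x, y) (0, 1)) y := by
  have h1 : HasFDerivAt (fun p : ℝ × ℝ => f p.1 p.2)
      (fderiv ℝ (fun p : ℝ × ℝ => f p.1 p.2) (x, y)) (x, y) :=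
    ((hf.differentiable letop') (x, y)).hasFDerivAt
  have h2 : HasDerivAt (fun y' : ℝ => ((x, y') : ℝ × ℝ)) ((0 : ℝ), (1 : ℝ)) y :=
    (hasDerivAt_const y x).prodMk (hasDerivAt_id y)
  exact h1.comp_hasDerivAt y h2

lemma hasDerivAt_px (hf : ContDiff ℝ (⊤ : ℕ∞) (fun p : ℝ × ℝ => f p.1 p.2)) (x y : ℝ) :
    HasDerivAt (fun x' => f x' y)
      (fderiv ℝ (fun p : ℝ × ℝ => f p.1 p.2) (x, y) (1, 0)) x := by
  have h1 : HasFDerivAt (fun p : ℝ × ℝ => f p.1 p.2)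
      (fderiv ℝ (fun p : ℝ × ℝ => f p.1 p.2) (x, y)) (x, y) :=
    ((hf.differentiable letop') (x, y)).hasFDerivAt
  have h2 : HasDerivAt (fun x' : ℝ => ((x', y) : ℝ × ℝ)) ((1 : ℝ), (0 : ℝ)) x :=
    (hasDerivAt_id x).prodMk (hasDerivAt_const x y)
  exact h1.comp_hasDerivAt x h2

lemma contDiff_derivy (hf : ContDiff ℝ (⊤ : ℕ∞) (fun p : ℝ × ℝ => f p.1 p.2)) :
    ContDiff ℝ (⊤ : ℕ∞) (fun p : ℝ × ℝ => deriv (fun y => f p.1 y) p.2) := by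
  have e : (fun p : ℝ × ℝ => deriv (fun y => f p.1 y) p.2)
      = fun p : ℝ × ℝ => fderiv ℝ (fun q : ℝ × ℝ => f q.1 q.2) p (0, 1) := by
    funext p
    have := (hasDerivAt_py hf p.1 p.2).deriv
    simpa using this
  rw [e]
  exact (hf.fderiv_right (m := (⊤ : ℕ∞)) leadd').clm_apply contDiff_const

lemma clairaut (hf : ContDiff ℝ (⊤ : ℕ∞) (fun p : ℝ × ℝ => f p.1 p.2)) (s t : ℝ) :
    deriv (fun x => deriv (fun y => f x y) t) s
      = deriv (fun y => deriv (fun x => f x y) s) t := by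
  set F : ℝ × ℝ → E := fun p => f p.1 p.2 with hF
  have hdF : ContDiff ℝ (⊤ : ℕ∞) (fderiv ℝ F) := hf.fderiv_right (m := (⊤ : ℕ∞)) leadd'
  have h1 : HasFDerivAt (fderiv ℝ F) (fderiv ℝ (fderiv ℝ F) (s, t)) (s, t) :=
    ((hdF.differentiable letop') (s, t)).hasFDerivAt
  have e1 : (fun x => deriv (fun y => f x y) t) = fun x => fderiv ℝ F (x, t) (0, 1) := by
    funext x; exact (hasDerivAt_py hf x t).deriv
  have e2 : (fun y => deriv (fun x => f x y) s) = fun y => fderiv ℝ F (s, y) (1, 0) := by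
    funext y; exact (hasDerivAt_px hf s y).deriv
  rw [e1, e2]
  have keyx : ∀ v : ℝ × ℝ, deriv (fun x : ℝ => fderiv ℝ F (x, t) v) s =
      fderiv ℝ (fderiv ℝ F) (s, t) (1, 0) v := by
    intro v
    have h2 : HasDerivAt (fun x : ℝ => ((x, t) : ℝ × ℝ)) ((1 : ℝ), (0 : ℝ)) s :=
      (hasDerivAt_id s).prodMk (hasDerivAt_const s t)
    have h3 : HasDerivAt (fun x : ℝ => fderiv ℝ F (x, t))
        (fderiv ℝ (fderiv ℝ F) (s, t) (1, 0)) s := h1.comp_hasDerivAt s h2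
    have h4 := ((ContinuousLinearMap.apply ℝ E v).hasFDerivAt.comp_hasDerivAt s h3)
    simpa [Function.comp_def] using h4.deriv
  have keyy : ∀ v : ℝ × ℝ, deriv (fun y : ℝ => fderiv ℝ F (s, y) v) t =
      fderiv ℝ (fderiv ℝ F) (s, t) (0, 1) v := by
    intro v
    have h2 : HasDerivAt (fun y : ℝ => ((s, y) : ℝ × ℝ)) ((0 : ℝ), (1 : ℝ)) t :=
      (hasDerivAt_const t s).prodMk (hasDerivAt_id t)
    have h3 : HasDerivAt (fun y : ℝ => fderiv ℝ F (s, y))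
        (fderiv ℝ (fderiv ℝ F) (s, t) (0, 1)) t := h1.comp_hasDerivAt t h2
    have h4 := ((ContinuousLinearMap.apply ℝ E v).hasFDerivAt.comp_hasDerivAt t h3)
    simpa [Function.comp_def] using h4.deriv
  rw [keyx (0, 1), keyy (1, 0)]
  have hsymm : IsSymmSndFDerivAt ℝ F (s, t) :=
    (hf.contDiffAt).isSymmSndFDerivAt (by simp; exact WithTop.coe_le_coe.2 (le_top : (2 : ℕ∞) ≤ ⊤))
  exact hsymm.eq (1, 0) (0, 1)

end Aux

/- ### Algebraic lemmas about `mink` -/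

lemma mink_symm (u v : Fin 4 → ℝ) : mink u v = mink v u := by
  simp only [mink]; ring

lemma mink_add_left (u v w : Fin 4 → ℝ) : mink (u + v) w = mink u w + mink v w := by
  simp only [mink, Pi.add_apply]; ring

lemma mink_smul_left (a : ℝ) (u w : Fin 4 → ℝ) : mink (a • u) w = a * mink u w := by
  simp only [mink, Pi.smul_apply, smul_eq_mul]; ring

lemma mink_neg_left (u w : Fin 4 → ℝ) : mink (-u) w = -(mink u w) := by
  simp only [mink, Pi.neg_apply]; ring

lemma mink_zero_left (w : Fin 4 → ℝ) : mink 0 w = 0 := by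
  simp [mink]

lemma mink_zero_right (u : Fin 4 → ℝ) : mink u 0 = 0 := by
  simp [mink]

lemma HasDerivAt.mink' {u v : ℝ → Fin 4 → ℝ} {u' v' : Fin 4 → ℝ} {x : ℝ}
    (hu : HasDerivAt u u' x) (hv : HasDerivAt v v' x) :
    HasDerivAt (fun y => mink (u y) (v y)) (mink u' (v x) + mink (u x) v') x := by
  have hui : ∀ i : Fin 4, HasDerivAt (fun y => u y i) (u' i) x := by
    intro i
    have := (ContinuousLinearMap.proj (R := ℝ) (φ := fun _ : Fin 4 => ℝ) i
      ).hasFDerivAt.comp_hasDerivAt x hu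
    simpa [Function.comp_def] using this
  have hvi : ∀ i : Fin 4, HasDerivAt (fun y => v y i) (v' i) x := by
    intro i
    have := (ContinuousLinearMap.proj (R := ℝ) (φ := fun _ : Fin 4 => ℝ) i
      ).hasFDerivAt.comp_hasDerivAt x hv
    simpa [Function.comp_def] using this
  have h := ((((hui 0).mul (hvi 0)).neg.add ((hui 1).mul (hvi 1))).add
      ((hui 2).mul (hvi 2))).add ((hui 3).mul (hvi 3))
  have heq : mink u' (v x) + mink (u x) v'
      = -(u' 0 * v x 0 + u x 0 * v' 0) + (u' 1 * v x 1 + u x 1 * v' 1)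
        + (u' 2 * v x 2 + u x 2 * v' 2) + (u' 3 * v x 3 + u x 3 * v' 3) := by
    simp only [mink]; ring
  rw [heq]
  exact h

theorem k1_quotient_formula_partially_null
    (γ T N B₁ B₂ : ℝ → ℝ → (Fin 4 → ℝ))
    (k₁ k₂ β₁ β₂ β₃ β₄ : ℝ → ℝ → ℝ)
    (ψ₁ : ℝ → ℝ → ℝ)
    (hγsmooth : ContDiff ℝ (⊤ : ℕ∞) (fun p : ℝ × ℝ => γ p.1 p.2))
    (hTsmooth : ContDiff ℝ (⊤ : ℕ∞) (fun p : ℝ × ℝ => T p.1 p.2))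
    (hNsmooth : ContDiff ℝ (⊤ : ℕ∞) (fun p : ℝ × ℝ => N p.1 p.2))
    (hB₁smooth : ContDiff ℝ (⊤ : ℕ∞) (fun p : ℝ × ℝ => B₁ p.1 p.2))
    (hB₂smooth : ContDiff ℝ (⊤ : ℕ∞) (fun p : ℝ × ℝ => B₂ p.1 p.2))
    (hk₁smooth : ContDiff ℝ (⊤ : ℕ∞) (fun p : ℝ × ℝ => k₁ p.1 p.2))
    (hk₂smooth : ContDiff ℝ (⊤ : ℕ∞) (fun p : ℝ × ℝ => k₂ p.1 p.2))
    (hβ₁smooth : ContDiff ℝ (⊤ : ℕ∞) (fun p : ℝ × ℝ => β₁ p.1 p.2))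
    (hβ₂smooth : ContDiff ℝ (⊤ : ℕ∞) (fun p : ℝ × ℝ => β₂ p.1 p.2))
    (hβ₃smooth : ContDiff ℝ (⊤ : ℕ∞) (fun p : ℝ × ℝ => β₃ p.1 p.2))
    (hβ₄smooth : ContDiff ℝ (⊤ : ℕ∞) (fun p : ℝ × ℝ => β₄ p.1 p.2))
    (hTT : ∀ s t : ℝ, mink (T s t) (T s t) = 1)
    (hNN : ∀ s t : ℝ, mink (N s t) (N s t) = 1)
    (hB₁B₁ : ∀ s t : ℝ, mink (B₁ s t) (B₁ s t) = 0)
    (hB₂B₂ : ∀ s t : ℝ, mink (B₂ s t) (B₂ s t) = 0)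
    (hB₁B₂ : ∀ s t : ℝ, mink (B₁ s t) (B₂ s t) = 1)
    (hTN : ∀ s t : ℝ, mink (T s t) (N s t) = 0)
    (hTB₁ : ∀ s t : ℝ, mink (T s t) (B₁ s t) = 0)
    (hTB₂ : ∀ s t : ℝ, mink (T s t) (B₂ s t) = 0)
    (hNB₁ : ∀ s t : ℝ, mink (N s t) (B₁ s t) = 0)
    (hNB₂ : ∀ s t : ℝ, mink (N s t) (B₂ s t) = 0)
    -- arclength parametrization and Frenet equations (k₃ = 0)
    (hT : ∀ s t : ℝ, T s t = deriv (fun x => γ x t) s)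
    (hunit : ∀ s t : ℝ, mnorm (deriv (fun x => γ x t) s) = 1)
    (hfr₁ : ∀ s t : ℝ, deriv (fun x => T x t) s = k₁ s t • N s t)
    (hfr₂ : ∀ s t : ℝ, deriv (fun x => N x t) s = -(k₁ s t) • T s t + k₂ s t • B₁ s t)
    (hfr₃ : ∀ s t : ℝ, deriv (fun x => B₁ x t) s = 0)
    (hfr₄ : ∀ s t : ℝ, deriv (fun x => B₂ x t) s = -(k₂ s t) • N s t)
    (hflow : ∀ s t : ℝ, deriv (fun x => γ s x) t =
      β₁ s t • T s t + β₂ s t • N s t + β₃ s t • B₁ s t + β₄ s t • B₂ s t)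
    -- inextensibility: ∂β₁/∂s = β₂k₁
    (hinext : ∀ s t : ℝ, deriv (fun x => β₁ x t) s = β₂ s t * k₁ s t)
    (hψ₁ : ∀ s t : ℝ, ψ₁ s t = mink (deriv (fun x => N s x) t) (B₁ s t)) :
    ∀ s t : ℝ, deriv (fun x => β₄ x t) s ≠ 0 →
      k₁ s t = -(deriv (fun x => ψ₁ x t) s / deriv (fun x => β₄ x t) s) := by
  intro s t hden
  -- partial derivative in t of the frame fields at (s,t)
  have hTy : HasDerivAt (fun y => T s y) (deriv (fun y => T s y) t) t :=
    (diffy hTsmooth s t).hasDerivAt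
  have hB₁y : HasDerivAt (fun y => B₁ s y) (deriv (fun y => B₁ s y) t) t :=
    (diffy hB₁smooth s t).hasDerivAt
  have hk₁y : HasDerivAt (fun y => k₁ s y) (deriv (fun y => k₁ s y) t) t :=
    (diffy hk₁smooth s t).hasDerivAt
  have hk₂y : HasDerivAt (fun y => k₂ s y) (deriv (fun y => k₂ s y) t) t :=
    (diffy hk₂smooth s t).hasDerivAt
  -- Claim A : mink (∂B₁/∂t) B₁ = 0
  have claimA : mink (deriv (fun y => B₁ s y) t) (B₁ s t) = 0 := by
    have hc := (hB₁y.mink' hB₁y).deriv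
    have e : (fun y => mink (B₁ s y) (B₁ s y)) = fun _ : ℝ => (0 : ℝ) :=
      funext fun y => hB₁B₁ s y
    rw [e, deriv_const] at hc
    have := mink_symm (B₁ s t) (deriv (fun y => B₁ s y) t)
    linarith
  -- Claim B : mink (∂T/∂t) B₁ = ∂β₄/∂s
  have claimB : mink (deriv (fun y => T s y) t) (B₁ s t) = deriv (fun x => β₄ x t) s := by
    have eT : (fun y => T s y) = fun y => deriv (fun x => γ x y) s :=
      funext fun y => hT s y
    have eflow : (fun x => deriv (fun y => γ x y) t)
        = fun x => β₁ x t • T x t + β₂ x t • N x t + β₃ x t • B₁ x t + β₄ x t • B₂ x t :=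
      funext fun x => hflow x t
    have step : deriv (fun y => T s y) t =
        deriv (fun x => β₁ x t • T x t + β₂ x t • N x t + β₃ x t • B₁ x t
          + β₄ x t • B₂ x t) s := by
      rw [eT, ← clairaut hγsmooth s t, eflow]
    -- compute that derivative via the Frenet equations
    have hβ₁x : HasDerivAt (fun x => β₁ x t) (deriv (fun x => β₁ x t) s) s :=
      (diffx hβ₁smooth s t).hasDerivAt
    have hβ₂x : HasDerivAt (fun x => β₂ x t) (deriv (fun x => β₂ x t) s) s :=
      (diffx hβ₂smooth s t).hasDerivAt
    have hβ₃x : HasDerivAt (fun x => β₃ x t) (deriv (fun x => β₃ x t) s) s :=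
      (diffx hβ₃smooth s t).hasDerivAt
    have hβ₄x : HasDerivAt (fun x => β₄ x t) (deriv (fun x => β₄ x t) s) s :=
      (diffx hβ₄smooth s t).hasDerivAt
    have hTx : HasDerivAt (fun x => T x t) (k₁ s t • N s t) s := by
      have := (diffx hTsmooth s t).hasDerivAt; rwa [hfr₁ s t] at this
    have hNx : HasDerivAt (fun x => N x t) (-(k₁ s t) • T s t + k₂ s t • B₁ s t) s := by
      have := (diffx hNsmooth s t).hasDerivAt; rwa [hfr₂ s t] at this
    have hB₁x : HasDerivAt (fun x => B₁ x t) (0 : Fin 4 → ℝ) s := by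
      have := (diffx hB₁smooth s t).hasDerivAt; rwa [hfr₃ s t] at this
    have hB₂x : HasDerivAt (fun x => B₂ x t) (-(k₂ s t) • N s t) s := by
      have := (diffx hB₂smooth s t).hasDerivAt; rwa [hfr₄ s t] at this
    have hbig := (((hβ₁x.smul hTx).add (hβ₂x.smul hNx)).add (hβ₃x.smul hB₁x)).add
      (hβ₄x.smul hB₂x)
    have step2 : deriv (fun x => β₁ x t • T x t + β₂ x t • N x t + β₃ x t • B₁ x t
        + β₄ x t • B₂ x t) s =
        (β₁ s t • (k₁ s t • N s t) + deriv (fun x => β₁ x t) s • T s t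
          + (β₂ s t • (-(k₁ s t) • T s t + k₂ s t • B₁ s t)
            + deriv (fun x => β₂ x t) s • N s t)
          + (β₃ s t • (0 : Fin 4 → ℝ) + deriv (fun x => β₃ x t) s • B₁ s t)
          + (β₄ s t • (-(k₂ s t) • N s t) + deriv (fun x => β₄ x t) s • B₂ s t)) :=
      hbig.deriv
    have hB₂B₁ : mink (B₂ s t) (B₁ s t) = 1 := by
      rw [mink_symm]; exact hB₁B₂ s t
    rw [step, step2]
    simp only [mink_add_left, mink_neg_left, mink_smul_left, smul_smul, neg_smul,
      smul_zero, mink_zero_left, hTB₁ s t, hNB₁ s t, hB₁B₁ s t, hB₂B₁]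
    ring
  -- the derivative of ψ₁ in s
  have hB₁x : HasDerivAt (fun x => B₁ x t) (0 : Fin 4 → ℝ) s := by
    have := (diffx hB₁smooth s t).hasDerivAt; rwa [hfr₃ s t] at this
  have hNtsm := contDiff_derivy hNsmooth
  have hNt : HasDerivAt (fun x => deriv (fun y => N x y) t)
      (deriv (fun x => deriv (fun y => N x y) t) s) s :=
    (diffx hNtsm s t).hasDerivAt
  have hD : deriv (fun x => deriv (fun y => N x y) t) s =
      (-(k₁ s t) • deriv (fun y => T s y) t + -deriv (fun y => k₁ s y) t • T s t
        + (k₂ s t • deriv (fun y => B₁ s y) t + deriv (fun y => k₂ s y) t • B₁ s t)) := by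
    rw [clairaut hNsmooth s t]
    have e : (fun y => deriv (fun x => N x y) s)
        = fun y => -(k₁ s y) • T s y + k₂ s y • B₁ s y := funext fun y => hfr₂ s y
    rw [e]
    exact (((hk₁y.neg).smul hTy).add (hk₂y.smul hB₁y)).deriv
  have hψs : deriv (fun x => ψ₁ x t) s =
      mink (deriv (fun x => deriv (fun y => N x y) t) s) (B₁ s t)
        + mink (deriv (fun y => N s y) t) (0 : Fin 4 → ℝ) := by
    have e : (fun x => ψ₁ x t) = fun x => mink (deriv (fun y => N x y) t) (B₁ x t) :=
      funext fun x => hψ₁ x t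
    rw [e]
    exact (hNt.mink' hB₁x).deriv
  have key : deriv (fun x => ψ₁ x t) s = -(k₁ s t) * deriv (fun x => β₄ x t) s := by
    rw [hψs, hD]
    simp only [mink_zero_right, add_zero, mink_add_left, mink_neg_left,
      mink_smul_left, neg_smul, hTB₁ s t, hB₁B₁ s t, claimA, claimB]
    ring
  rw [key]
  field_simp
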